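/- For every real t, p and every y with 0 < y < Φ(t), there exists a unique real number a such that ∫_{-∞}^{t} Φ(a(s-t)+p)·φ(s) ds = y. -/

import Mathlib

open Real MeasureTheory Set Filter Topology

noncomputable def phi (s : ℝ) : ℝ := Real.exp (-s ^ 2 / 2) / Real.sqrt (2 * Real.pi)

noncomputable def Phi (t : ℝ) : ℝ := ∫ s in Set.Iic t, phi s

lemma phi_pos (s : ℝ) : 0 < phi s := by
  unfold phi
  positivity

lemma phi_continuous : Continuous phi := by
  unfold phi
  fun_prop

lemma phi_integrable : Integrable phi := by
  have h : Integrable (fun s : ℝ => Real.exp (-(1/2) * s ^ 2) * (Real.sqrt (2 * Real.pi))⁻¹) :=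
    (integrable_exp_neg_mul_sq (by norm_num : (0:ℝ) < 1/2)).mul_const _
  refine h.congr (Eventually.of_forall fun s => ?_)
  unfold phi
  rw [div_eq_mul_inv]
  ring_nf

lemma integral_phi : ∫ s, phi s = 1 := by
  have h : ∫ s : ℝ, Real.exp (-(1/2) * s ^ 2) = Real.sqrt (Real.pi / (1/2)) :=
    integral_gaussian (1/2)
  have h2 : (fun s : ℝ => phi s) = fun s => Real.exp (-(1/2) * s ^ 2) / Real.sqrt (2 * Real.pi) := by
    funext s; unfold phi; ring_nf
  rw [h2, integral_div, h]
  rw [show Real.pi / (1/2) = 2 * Real.pi by ring]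
  rw [div_self]
  positivity

lemma phi_intervalIntegrable (a b : ℝ) : IntervalIntegrable phi volume a b :=
  phi_integrable.intervalIntegrable

lemma Phi_sub_Phi (a b : ℝ) : Phi b - Phi a = ∫ s in a..b, phi s := by
  unfold Phi
  exact intervalIntegral.integral_Iic_sub_Iic phi_integrable.integrableOn
    phi_integrable.integrableOn

lemma Phi_strictMono : StrictMono Phi := by
  intro a b hab
  have h := Phi_sub_Phi a b
  have hpos : 0 < ∫ s in a..b, phi s :=
    intervalIntegral.intervalIntegral_pos_of_pos (phi_intervalIntegrable a b) phi_pos hab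
  linarith

lemma Phi_continuous : Continuous Phi := by
  have h : Continuous fun b => ∫ s in (0:ℝ)..b, phi s :=
    phi_integrable.continuous_primitive 0
  have : Phi = fun b => Phi 0 + ∫ s in (0:ℝ)..b, phi s := by
    funext b
    have := Phi_sub_Phi 0 b
    linarith
  rw [this]
  exact continuous_const.add h

lemma Phi_nonneg (x : ℝ) : 0 ≤ Phi x :=
  setIntegral_nonneg measurableSet_Iic fun s _ => (phi_pos s).le

lemma Phi_le_one (x : ℝ) : Phi x ≤ 1 := by
  rw [← integral_phi]
  exact setIntegral_le_integral phi_integrable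
    (Eventually.of_forall fun s => (phi_pos s).le)

lemma Phi_eq_integral_indicator (x : ℝ) : Phi x = ∫ s, (Set.Iic x).indicator phi s := by
  unfold Phi
  rw [integral_indicator measurableSet_Iic]

lemma Phi_tendsto_atTop : Tendsto Phi atTop (𝓝 1) := by
  rw [← integral_phi]
  have := tendsto_integral_filter_of_dominated_convergence (μ := volume) (l := atTop)
    (F := fun x s => (Set.Iic x).indicator phi s) (f := phi) phi
    (Eventually.of_forall fun x =>
      (phi_continuous.aestronglyMeasurable.indicator measurableSet_Iic))
    (Eventually.of_forall fun x => Eventually.of_forall fun s => by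
      rw [Real.norm_eq_abs, abs_of_nonneg (Set.indicator_nonneg (fun s _ => (phi_pos s).le) s)]
      exact Set.indicator_le_self' (fun s _ => (phi_pos s).le) s)
    phi_integrable
    (Eventually.of_forall fun s => by
      refine tendsto_const_nhds.congr' ?_
      filter_upwards [eventually_ge_atTop s] with x hx
      simp [Set.indicator_of_mem (Set.mem_Iic.mpr hx)])
  refine this.congr fun x => ?_
  exact (Phi_eq_integral_indicator x).symm

lemma Phi_tendsto_atBot : Tendsto Phi atBot (𝓝 0) := by
  have h0 : (0 : ℝ) = ∫ _ : ℝ, (0 : ℝ) := by simp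
  rw [h0]
  have := tendsto_integral_filter_of_dominated_convergence (μ := volume) (l := atBot)
    (F := fun x s => (Set.Iic x).indicator phi s) (f := fun _ => (0:ℝ)) phi
    (Eventually.of_forall fun x =>
      (phi_continuous.aestronglyMeasurable.indicator measurableSet_Iic))
    (Eventually.of_forall fun x => Eventually.of_forall fun s => by
      rw [Real.norm_eq_abs, abs_of_nonneg (Set.indicator_nonneg (fun s _ => (phi_pos s).le) s)]
      exact Set.indicator_le_self' (fun s _ => (phi_pos s).le) s)
    phi_integrable
    (Eventually.of_forall fun s => by
      refine tendsto_const_nhds.congr' ?_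
      filter_upwards [eventually_lt_atBot s] with x hx
      simp [Set.indicator_of_notMem (by simpa using hx.not_ge : s ∉ Set.Iic x)])
  refine this.congr fun x => ?_
  exact (Phi_eq_integral_indicator x).symm

theorem stmt_6 (t p y : ℝ) (hy0 : 0 < y) (hy1 : y < Phi t) :
    ∃! a : ℝ, ∫ s in Set.Iic t, Phi (a * (s - t) + p) * phi s = y := by
  set F : ℝ → ℝ := fun a => ∫ s in Set.Iic t, Phi (a * (s - t) + p) * phi s with hF
  -- basic facts
  have habs : ∀ a s : ℝ, ‖Phi (a * (s - t) + p) * phi s‖ ≤ phi s := by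
    intro a s
    rw [Real.norm_eq_abs, abs_mul, abs_of_nonneg (Phi_nonneg _), abs_of_nonneg (phi_pos s).le]
    calc Phi (a * (s - t) + p) * phi s ≤ 1 * phi s :=
          mul_le_mul_of_nonneg_right (Phi_le_one _) (phi_pos s).le
      _ = phi s := one_mul _
  have hcont : ∀ a : ℝ, Continuous fun s => Phi (a * (s - t) + p) * phi s := fun a =>
    (Phi_continuous.comp (by fun_prop)).mul phi_continuous
  have hint : ∀ a : ℝ, IntegrableOn (fun s => Phi (a * (s - t) + p) * phi s) (Set.Iic t) := by
    intro a
    refine (phi_integrable.restrict (s := Set.Iic t)).mono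
      (hcont a).aestronglyMeasurable ?_
    refine Eventually.of_forall fun s => ?_
    rw [Real.norm_eq_abs (phi s), abs_of_nonneg (phi_pos s).le]
    exact habs a s
  -- a.e. on the restricted measure, s < t
  have hae_lt : ∀ᵐ s ∂(volume.restrict (Set.Iic t)), s < t := by
    have h1 : ∀ᵐ s ∂(volume.restrict (Set.Iic t)), s ∈ Set.Iic t :=
      ae_restrict_mem measurableSet_Iic
    have h2 : ∀ᵐ s ∂(volume.restrict (Set.Iic t)), s ≠ t := by
      refine ae_mono Measure.restrict_le_self ?_
      exact (MeasureTheory.compl_mem_ae_iff.mpr (Real.volume_singleton (a := t)))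
    filter_upwards [h1, h2] with s h1 h2
    exact lt_of_le_of_ne h1 h2
  -- F is continuous
  have hFcont : Continuous F := by
    refine continuous_of_dominated (bound := phi)
      (fun a => (hcont a).aestronglyMeasurable)
      (fun a => Eventually.of_forall fun s => habs a s)
      (phi_integrable.restrict)
      (Eventually.of_forall fun s => ?_)
    exact (Phi_continuous.comp (by fun_prop)).mul continuous_const
  -- F is strictly antitone
  have hFanti : StrictAnti F := by
    intro a b hab
    have hdiff : F a - F b =
        ∫ s in Set.Iic t, (Phi (a * (s - t) + p) - Phi (b * (s - t) + p)) * phi s := by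
      rw [hF]
      rw [← integral_sub (hint a) (hint b)]
      congr 1
      funext s
      ring
    have hnonneg : 0 ≤ᵐ[volume.restrict (Set.Iic t)]
        fun s => (Phi (a * (s - t) + p) - Phi (b * (s - t) + p)) * phi s := by
      filter_upwards [hae_lt] with s hs
      have hst : s - t ≤ 0 := by linarith
      have : b * (s - t) ≤ a * (s - t) := by nlinarith
      have hPhi : Phi (b * (s - t) + p) ≤ Phi (a * (s - t) + p) :=
        Phi_strictMono.monotone (by linarith)
      have hp := phi_pos s
      show (0:ℝ) ≤ _
      exact mul_nonneg (by linarith) hp.le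
    have hinteg : Integrable
        (fun s => (Phi (a * (s - t) + p) - Phi (b * (s - t) + p)) * phi s)
        (volume.restrict (Set.Iic t)) := by
      have := (hint a).sub (hint b)
      refine this.congr (Eventually.of_forall fun s => ?_)
      simp only [Pi.sub_apply]
      ring
    have hpos : 0 < ∫ s in Set.Iic t,
        (Phi (a * (s - t) + p) - Phi (b * (s - t) + p)) * phi s := by
      rw [integral_pos_iff_support_of_nonneg_ae hnonneg hinteg]
      have hsub : Set.Iio t ⊆ Function.support
          fun s => (Phi (a * (s - t) + p) - Phi (b * (s - t) + p)) * phi s := by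
        intro s hs
        have hst : s - t < 0 := sub_neg.mpr (Set.mem_Iio.mp hs)
        have hlt : b * (s - t) < a * (s - t) := by nlinarith
        have hPhi : Phi (b * (s - t) + p) < Phi (a * (s - t) + p) :=
          Phi_strictMono (by linarith)
        have := phi_pos s
        intro h
        simp only at h
        nlinarith
      refine lt_of_lt_of_le ?_ (measure_mono hsub)
      rw [Measure.restrict_apply measurableSet_Iio]
      have : Set.Iio t ∩ Set.Iic t = Set.Iio t := by
        ext s; simp; intro h; exact h.le
      rw [this, Real.volume_Iio]
      simp
    linarith
  -- limit at atTop : 0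
  have hFtop : Tendsto F atTop (𝓝 0) := by
    have h0 : (0 : ℝ) = ∫ _ in Set.Iic t, (0 : ℝ) := by simp
    rw [h0]
    refine tendsto_integral_filter_of_dominated_convergence (μ := volume.restrict (Set.Iic t))
      (F := fun a s => Phi (a * (s - t) + p) * phi s) (f := fun _ => (0:ℝ)) phi
      (Eventually.of_forall fun a => (hcont a).aestronglyMeasurable)
      (Eventually.of_forall fun a => Eventually.of_forall fun s => habs a s)
      (phi_integrable.restrict) ?_
    filter_upwards [hae_lt] with s hs
    have hst : s - t < 0 := sub_neg.mpr hs
    have h1 : Tendsto (fun a : ℝ => a * (s - t) + p) atTop atBot :=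
      tendsto_atBot_add_const_right _ p (tendsto_id.atTop_mul_const_of_neg hst)
    have h2 : Tendsto (fun a : ℝ => Phi (a * (s - t) + p)) atTop (𝓝 0) :=
      Phi_tendsto_atBot.comp h1
    have := h2.mul_const (phi s)
    simpa using this
  -- limit at atBot : Phi t
  have hFbot : Tendsto F atBot (𝓝 (Phi t)) := by
    have h0 : Phi t = ∫ s in Set.Iic t, phi s := rfl
    rw [h0]
    refine tendsto_integral_filter_of_dominated_convergence (μ := volume.restrict (Set.Iic t))
      (F := fun a s => Phi (a * (s - t) + p) * phi s) (f := phi) phi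
      (Eventually.of_forall fun a => (hcont a).aestronglyMeasurable)
      (Eventually.of_forall fun a => Eventually.of_forall fun s => habs a s)
      (phi_integrable.restrict) ?_
    filter_upwards [hae_lt] with s hs
    have hst : s - t < 0 := sub_neg.mpr hs
    have h1 : Tendsto (fun a : ℝ => a * (s - t) + p) atBot atTop :=
      tendsto_atTop_add_const_right _ p ((tendsto_id (α := ℝ)).atBot_mul_const_of_neg hst)
    have h2 : Tendsto (fun a : ℝ => Phi (a * (s - t) + p)) atBot (𝓝 1) :=
      Phi_tendsto_atTop.comp h1
    have := h2.mul_const (phi s)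
    simpa using this
  -- existence via IVT
  obtain ⟨a₀, ha₀⟩ := (hFbot.eventually_const_lt hy1).exists
  obtain ⟨b₀, hb₀, hab₀⟩ := ((hFtop.eventually_lt_const hy0).and (eventually_ge_atTop a₀)).exists
  have hy_mem : y ∈ Set.Icc (F b₀) (F a₀) := ⟨hb₀.le, ha₀.le⟩
  obtain ⟨a, _, ha⟩ := intermediate_value_Icc' hab₀ hFcont.continuousOn hy_mem
  refine ⟨a, ha, fun a' ha' => hFanti.injective (ha'.trans ha.symm)⟩
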